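/- In the algebra H(w), for any w̃ in the polar Aff(w) (i.e. any w̃ with Σ w̃^{μλ₁...λ_{m-1}} w_{λ₁...λ_{m-1}ν} = δ^μ_ν), one has s^μ_ν = Σ w̃^{μ λ₁...λ_{m-1}} u^{ρ₁}_{λ₁} ⋯ u^{ρ_{m-1}}_{λ_{m-1}} w_{ρ₁...ρ_{m-1} ν} for all μ, ν. In particular the generators s^μ_ν are determined by the u^μ_ν, so H(w) is generated as an algebra by the u^μ_ν alone. -/
import Mathlib


/-- Relation (20): In any algebra with elements `u^μ_ν`, `s^μ_ν`
satisfying the defining relations of `H(w)`, for every polar element `w̃ ∈ Aff(w)`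
one has `s^μ_ν = Σ w̃^{μλ₁…λ_{M-1}} u^{ρ₁}_{λ₁} ⋯ u^{ρ_{M-1}}_{λ_{M-1}} w_{ρ₁…ρ_{M-1}ν}`;
in particular the `s^μ_ν` are determined by the `u^μ_ν`. -/
theorem stmt_13 {K A : Type*} [Field K] [Ring A] [Algebra K A]
    {n m : ℕ} (hn : 2 ≤ n) (hm : 1 ≤ m)
    (wc : (Fin (m + 1) → Fin n) → K) (Q Qi : Matrix (Fin n) (Fin n) K)
    (hQQi : Q * Qi = 1) (hQiQ : Qi * Q = 1)
    (hcyc : ∀ ls : Fin (m + 1) → Fin n,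
      wc ls = ∑ lam : Fin n, Q lam (ls (Fin.last m)) * wc (Fin.cons lam (Fin.init ls)))
    (u s : Fin n → Fin n → A)
    (hus : ∀ μ ν : Fin n,
      ∑ lam : Fin n, u μ lam * s lam ν = if μ = ν then (1 : A) else 0)
    (htus : ∀ μ ν : Fin n,
      ∑ lam : Fin n, ∑ ρ : Fin n, ∑ σ : Fin n,
        (Q lam ν * Qi σ ρ) • (u ρ lam * s μ σ) = if μ = ν then (1 : A) else 0)
    (hinvw : ∀ μs : Fin (m + 1) → Fin n,
      ∑ ls : Fin (m + 1) → Fin n,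
        wc ls • (List.ofFn fun i => u (ls i) (μs i)).prod = wc μs • (1 : A)) :
    ∀ wt : (Fin (m + 1) → Fin n) → K,
      (∀ μ ν : Fin n,
        ∑ l : Fin m → Fin n, wt (Fin.cons μ l) * wc (Fin.snoc l ν)
          = if μ = ν then 1 else 0) →
      ∀ μ ν : Fin n,
        s μ ν = ∑ l : Fin m → Fin n, ∑ ρ : Fin m → Fin n,
          (wt (Fin.cons μ l) * wc (Fin.snoc ρ ν)) •
            (List.ofFn fun i => u (ρ i) (l i)).prod := by
  intro wt hwt μ ν
  -- split of the length-(m+1) product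
  have hsplit : ∀ (ρ : Fin m → Fin n) (σ : Fin n) (l : Fin m → Fin n) (lam : Fin n),
      (List.ofFn fun i : Fin (m+1) =>
        u ((Fin.snoc ρ σ : Fin (m+1) → Fin n) i) ((Fin.snoc l lam : Fin (m+1) → Fin n) i)).prod
      = (List.ofFn fun i : Fin m => u (ρ i) (l i)).prod * u σ lam := by
    intro ρ σ l lam
    rw [List.ofFn_succ']
    simp [Fin.snoc_castSucc, Fin.snoc_last]
  -- key lemma
  have key : ∀ l : Fin m → Fin n,
      ∑ ρ : Fin m → Fin n,
        wc (Fin.snoc ρ ν) • (List.ofFn fun i => u (ρ i) (l i)).prod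
      = ∑ lam : Fin n, wc (Fin.snoc l lam) • s lam ν := by
    intro l
    have h1 : ∀ lam : Fin n,
        (∑ ls : Fin (m+1) → Fin n,
          wc ls • (List.ofFn fun i => u (ls i) ((Fin.snoc l lam : Fin (m+1) → Fin n) i)).prod) * s lam ν
        = wc (Fin.snoc l lam) • s lam ν := by
      intro lam
      rw [hinvw (Fin.snoc l lam), smul_mul_assoc, one_mul]
    calc
      ∑ ρ : Fin m → Fin n,
          wc (Fin.snoc ρ ν) • (List.ofFn fun i => u (ρ i) (l i)).prod
        = ∑ ρ : Fin m → Fin n, ∑ σ : Fin n,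
            wc (Fin.snoc ρ σ) •
              ((List.ofFn fun i => u (ρ i) (l i)).prod *
                (if σ = ν then (1:A) else 0)) := by
          refine Finset.sum_congr rfl fun ρ _ => ?_
          rw [Finset.sum_eq_single ν]
          · simp
          · intro σ _ hσ; simp [hσ]
          · simp
      _ = ∑ lam : Fin n,
            (∑ ls : Fin (m+1) → Fin n,
              wc ls • (List.ofFn fun i => u (ls i) ((Fin.snoc l lam : Fin (m+1) → Fin n) i)).prod) * s lam ν := by
          symm
          calc
            ∑ lam : Fin n, (∑ ls : Fin (m+1) → Fin n,
                wc ls • (List.ofFn fun i => u (ls i) ((Fin.snoc l lam : Fin (m+1) → Fin n) i)).prod) * s lam ν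
              = ∑ lam : Fin n, ∑ p : Fin n × (Fin m → Fin n),
                  wc (Fin.snoc p.2 p.1) •
                    ((List.ofFn fun i => u (p.2 i) (l i)).prod * (u p.1 lam * s lam ν)) := by
                refine Finset.sum_congr rfl fun lam _ => ?_
                rw [Finset.sum_mul, ← Equiv.sum_comp (Fin.snocEquiv (fun _ => Fin n))
                  (fun ls => wc ls • (List.ofFn fun i =>
                    u (ls i) ((Fin.snoc l lam : Fin (m+1) → Fin n) i)).prod * s lam ν)]
                refine Finset.sum_congr rfl fun p _ => ?_
                simp only [Fin.snocEquiv, Equiv.coe_fn_mk]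
                rw [hsplit, smul_mul_assoc, mul_assoc]
            _ = ∑ p : Fin n × (Fin m → Fin n),
                  wc (Fin.snoc p.2 p.1) • ((List.ofFn fun i => u (p.2 i) (l i)).prod *
                    (if p.1 = ν then (1:A) else 0)) := by
                rw [Finset.sum_comm]
                refine Finset.sum_congr rfl fun p _ => ?_
                rw [← Finset.smul_sum, ← Finset.mul_sum, hus p.1 ν]
            _ = ∑ ρ : Fin m → Fin n, ∑ σ : Fin n,
                  wc (Fin.snoc ρ σ) •
                    ((List.ofFn fun i => u (ρ i) (l i)).prod *
                      (if σ = ν then (1:A) else 0)) := by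
                rw [Fintype.sum_prod_type]
                exact Finset.sum_comm
      _ = ∑ lam : Fin n, wc (Fin.snoc l lam) • s lam ν := by
          exact Finset.sum_congr rfl fun lam _ => h1 lam
  calc
    s μ ν = ∑ lam : Fin n, (if μ = lam then (1:K) else 0) • s lam ν := by
      rw [Finset.sum_eq_single μ]
      · simp
      · intro lam _ h; simp [Ne.symm h]
      · simp
    _ = ∑ lam : Fin n, (∑ l : Fin m → Fin n,
          wt (Fin.cons μ l) * wc (Fin.snoc l lam)) • s lam ν := by
        refine Finset.sum_congr rfl fun lam _ => ?_
        rw [hwt μ lam]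
    _ = ∑ l : Fin m → Fin n, wt (Fin.cons μ l) •
          (∑ lam : Fin n, wc (Fin.snoc l lam) • s lam ν) := by
        simp only [Finset.sum_smul]
        rw [Finset.sum_comm]
        refine Finset.sum_congr rfl fun l _ => ?_
        rw [Finset.smul_sum]
        simp only [smul_smul]
    _ = ∑ l : Fin m → Fin n, ∑ ρ : Fin m → Fin n,
          (wt (Fin.cons μ l) * wc (Fin.snoc ρ ν)) •
            (List.ofFn fun i => u (ρ i) (l i)).prod := by
        refine Finset.sum_congr rfl fun l _ => ?_
        rw [← key l, Finset.smul_sum]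
        refine Finset.sum_congr rfl fun ρ _ => ?_
        rw [smul_smul]
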